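/- For all integers k ≥ 4 and t with 2 ≤ t ≤ k-1, f(t) < (1 - 1/k)^t, where f(t) = C(t, ⌊t/2⌋) · ⌈t/2⌉^⌈t/2⌉ · (⌊t/2⌋+1)^⌊t/2⌋ / (t+1)^t. -/

import Mathlib

/-- Squared central binomial bound: `C(2m,m)² (3m+1) ≤ 16^m`. -/
lemma aux_cb_sq (m : ℕ) : (Nat.centralBinom m) ^ 2 * (3 * m + 1) ≤ 16 ^ m := by
  induction m with
  | zero => simp [Nat.centralBinom]
  | succ m ih =>
    have h := Nat.succ_mul_centralBinom_succ m
    have key : 4 * (2 * m + 1) ^ 2 * (3 * (m + 1) + 1) ≤ 16 * (m + 1) ^ 2 * (3 * m + 1) := by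
      nlinarith [sq_nonneg m]
    have hmain : (m + 1) ^ 2 * (Nat.centralBinom (m + 1) ^ 2 * (3 * (m + 1) + 1))
        ≤ (m + 1) ^ 2 * 16 ^ (m + 1) := by
      calc (m + 1) ^ 2 * (Nat.centralBinom (m + 1) ^ 2 * (3 * (m + 1) + 1))
          = ((m + 1) * Nat.centralBinom (m + 1)) ^ 2 * (3 * (m + 1) + 1) := by ring
        _ = (2 * (2 * m + 1) * Nat.centralBinom m) ^ 2 * (3 * (m + 1) + 1) := by rw [h]
        _ = (4 * (2 * m + 1) ^ 2 * (3 * (m + 1) + 1)) * Nat.centralBinom m ^ 2 := by ring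
        _ ≤ (16 * (m + 1) ^ 2 * (3 * m + 1)) * Nat.centralBinom m ^ 2 :=
            Nat.mul_le_mul_right _ key
        _ = 16 * (m + 1) ^ 2 * (Nat.centralBinom m ^ 2 * (3 * m + 1)) := by ring
        _ ≤ 16 * (m + 1) ^ 2 * 16 ^ m := Nat.mul_le_mul_left _ ih
        _ = (m + 1) ^ 2 * 16 ^ (m + 1) := by ring
    exact Nat.le_of_mul_le_mul_left hmain (by positivity)

/-- Real version: `C(2m,m) √(3m+1) ≤ 4^m`. -/
lemma aux_cb_real (m : ℕ) :
    (Nat.centralBinom m : ℝ) * Real.sqrt (3 * m + 1) ≤ 4 ^ m := by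
  have h := aux_cb_sq m
  have h' : ((Nat.centralBinom m : ℝ)) ^ 2 * (3 * m + 1) ≤ (4 ^ m : ℝ) ^ 2 := by
    have : ((Nat.centralBinom m ^ 2 * (3 * m + 1) : ℕ) : ℝ) ≤ ((16 ^ m : ℕ) : ℝ) := by
      exact_mod_cast h
    push_cast at this
    calc ((Nat.centralBinom m : ℝ)) ^ 2 * (3 * m + 1) ≤ (16 : ℝ) ^ m := this
      _ = (4 ^ m : ℝ) ^ 2 := by rw [← pow_mul, mul_comm m 2, pow_mul]; norm_num
  have hnn : (0 : ℝ) ≤ 3 * m + 1 := by positivity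
  calc (Nat.centralBinom m : ℝ) * Real.sqrt (3 * m + 1)
      = Real.sqrt ((Nat.centralBinom m : ℝ) ^ 2 * (3 * m + 1)) := by
        rw [Real.sqrt_mul (by positivity), Real.sqrt_sq (by positivity)]
    _ ≤ Real.sqrt ((4 ^ m : ℝ) ^ 2) := Real.sqrt_le_sqrt h'
    _ = 4 ^ m := Real.sqrt_sq (by positivity)

/-- `(n+1)^n < 3 n^n` for `n ≥ 1`. -/
lemma aux_exp3 (n : ℕ) (hn : 1 ≤ n) : ((n : ℝ) + 1) ^ n < 3 * (n : ℝ) ^ n := by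
  have hn0 : (0 : ℝ) < n := by exact_mod_cast hn
  have h1 : (n : ℝ) + 1 ≤ Real.exp (1 / n) * n := by
    have := Real.add_one_le_exp (1 / (n : ℝ))
    calc (n : ℝ) + 1 = (1 / n + 1) * n := by field_simp; ring
      _ ≤ Real.exp (1 / n) * n := by
          exact mul_le_mul_of_nonneg_right this (le_of_lt hn0)
  have h2 : ((n : ℝ) + 1) ^ n ≤ (Real.exp (1 / n) * n) ^ n :=
    pow_le_pow_left₀ (by positivity) h1 n
  have h3 : (Real.exp (1 / n) * (n : ℝ)) ^ n = Real.exp 1 * (n : ℝ) ^ n := by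
    rw [mul_pow, ← Real.exp_nat_mul]
    congr 2
    field_simp
  have he : Real.exp 1 < 3 := by
    have := Real.exp_one_lt_d9
    linarith
  calc ((n : ℝ) + 1) ^ n ≤ Real.exp 1 * (n : ℝ) ^ n := by rw [← h3]; exact h2
    _ < 3 * (n : ℝ) ^ n := by
        have : (0 : ℝ) < (n : ℝ) ^ n := by positivity
        nlinarith

/-- Key numerator bound: for `t ≥ 3`,
`C(t, ⌊t/2⌋) ⌈t/2⌉^⌈t/2⌉ (⌊t/2⌋+1)^⌊t/2⌋ < t^t`. -/
lemma aux_key (t : ℕ) (ht : 3 ≤ t) :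
    (Nat.choose t (t / 2) : ℝ) * ((t + 1) / 2 : ℕ) ^ ((t + 1) / 2) *
      (t / 2 + 1 : ℕ) ^ (t / 2) < (t : ℝ) ^ t := by
  rcases Nat.even_or_odd t with he | ho
  · -- t = 2m, m ≥ 2
    obtain ⟨m, rfl⟩ := he
    have hm2 : 2 ≤ m := by omega
    have e1 : (m + m) / 2 = m := by omega
    have e2 : (m + m + 1) / 2 = m := by omega
    have e3 : m + m = 2 * m := by ring
    rw [e1, e2]
    have hch : Nat.choose (m + m) m = Nat.centralBinom m := by
      rw [Nat.centralBinom, ← e3]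
    rw [hch]
    rcases eq_or_lt_of_le hm2 with rfl | hm3
    · norm_num [Nat.centralBinom, Nat.choose]
    · -- m ≥ 3
      have hm3' : 3 ≤ m := hm3
      have hC := aux_cb_real m
      have hCpos : (0 : ℝ) < Nat.centralBinom m := by
        exact_mod_cast Nat.centralBinom_pos m
      have hs : (3 : ℝ) ≤ Real.sqrt (3 * m + 1) := by
        rw [Real.le_sqrt' (by norm_num)]
        have : (3 : ℝ) ≤ (m : ℝ) := by exact_mod_cast hm3'
        nlinarith
      have h1 : ((m : ℝ) + 1) ^ m < 3 * (m : ℝ) ^ m := aux_exp3 m (by omega)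
      have hmpos : (0 : ℝ) < (m : ℝ) ^ m := by positivity
      have step1 : (Nat.centralBinom m : ℝ) * (m : ℝ) ^ m * ((m : ℝ) + 1) ^ m
          < (Nat.centralBinom m : ℝ) * (m : ℝ) ^ m * (3 * (m : ℝ) ^ m) := by
        apply mul_lt_mul_of_pos_left h1 (by positivity)
      have step2 : (Nat.centralBinom m : ℝ) * (m : ℝ) ^ m * (3 * (m : ℝ) ^ m)
          ≤ 4 ^ m * ((m : ℝ) ^ m * (m : ℝ) ^ m) := by
        have h3s : (Nat.centralBinom m : ℝ) * 3 ≤ 4 ^ m := by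
          calc (Nat.centralBinom m : ℝ) * 3 ≤ (Nat.centralBinom m : ℝ) * Real.sqrt (3 * m + 1) :=
                mul_le_mul_of_nonneg_left hs (le_of_lt hCpos)
            _ ≤ 4 ^ m := hC
        calc (Nat.centralBinom m : ℝ) * (m : ℝ) ^ m * (3 * (m : ℝ) ^ m)
            = ((Nat.centralBinom m : ℝ) * 3) * ((m : ℝ) ^ m * (m : ℝ) ^ m) := by ring
          _ ≤ 4 ^ m * ((m : ℝ) ^ m * (m : ℝ) ^ m) := by
              exact mul_le_mul_of_nonneg_right h3s (by positivity)
      have hfin : (4 : ℝ) ^ m * ((m : ℝ) ^ m * (m : ℝ) ^ m) = ((m : ℝ) + (m : ℝ)) ^ (m + m) := by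
        have h2m : ((m : ℝ) + (m : ℝ)) = 2 * (m : ℝ) := by ring
        have h4 : (4 : ℝ) ^ m = 2 ^ m * 2 ^ m := by rw [← mul_pow]; norm_num
        rw [h2m, pow_add, mul_pow, h4]
        ring
      have goal' : (Nat.centralBinom m : ℝ) * (m : ℝ) ^ m * ((m : ℝ) + 1) ^ m
          < ((m : ℝ) + (m : ℝ)) ^ (m + m) := by
        calc (Nat.centralBinom m : ℝ) * (m : ℝ) ^ m * ((m : ℝ) + 1) ^ m
            < (Nat.centralBinom m : ℝ) * (m : ℝ) ^ m * (3 * (m : ℝ) ^ m) := step1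
          _ ≤ 4 ^ m * ((m : ℝ) ^ m * (m : ℝ) ^ m) := step2
          _ = ((m : ℝ) + (m : ℝ)) ^ (m + m) := hfin
      exact_mod_cast goal'
  · -- t = 2m+1
    obtain ⟨m, rfl⟩ := ho
    have hm1 : 1 ≤ m := by omega
    have e1 : (2 * m + 1) / 2 = m := by omega
    have e2 : (2 * m + 1 + 1) / 2 = m + 1 := by omega
    rw [e1, e2]
    rcases eq_or_lt_of_le hm1 with rfl | hm2
    · have h31 : Nat.choose 3 1 = 3 := by decide
      norm_num [h31]
    · have hm2' : 2 ≤ m := hm2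
      have h2C : Nat.centralBinom (m + 1) = 2 * Nat.choose (2 * m + 1) m := by
        rw [Nat.centralBinom, show 2 * (m + 1) = (2 * m + 1) + 1 by ring,
          Nat.choose_succ_succ, Nat.choose_symm_half]
        omega
      set C' : ℝ := (Nat.choose (2 * m + 1) m : ℝ) with hC'
      have hBC : (Nat.centralBinom (m + 1) : ℝ) = 2 * C' := by
        rw [hC']; exact_mod_cast h2C
      have hC'pos : (0 : ℝ) < C' := by
        rw [hC']
        exact_mod_cast Nat.choose_pos (by omega : m ≤ 2 * m + 1)
      have hBpos : (0 : ℝ) < (Nat.centralBinom (m + 1) : ℝ) := by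
        exact_mod_cast Nat.centralBinom_pos (m + 1)
      have hB := aux_cb_real (m + 1)
      have hs : (3 : ℝ) ≤ Real.sqrt (3 * ((m : ℝ) + 1) + 1) := by
        rw [Real.le_sqrt' (by norm_num)]
        have : (2 : ℝ) ≤ (m : ℝ) := by exact_mod_cast hm2'
        nlinarith
      push_cast at hB
      have hexp : (2 * (m : ℝ) + 1 + 1) ^ (2 * m + 1) < 3 * (2 * (m : ℝ) + 1) ^ (2 * m + 1) := by
        have := aux_exp3 (2 * m + 1) (by omega)
        push_cast at this
        convert this using 3 <;> push_cast <;> ring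
      have hpos1 : (0 : ℝ) < 2 * (m : ℝ) + 1 := by positivity
      have goal' : C' * ((m : ℝ) + 1) ^ (m + 1) * ((m : ℝ) + 1) ^ m
          < (2 * (m : ℝ) + 1) ^ (2 * m + 1) := by
        have hmul : (0 : ℝ) < 2 * 2 ^ (2 * m + 1) := by positivity
        rw [← mul_lt_mul_iff_right₀ hmul]
        have hpowsplit : ((m : ℝ) + 1) ^ (m + 1) * ((m : ℝ) + 1) ^ m
            = ((m : ℝ) + 1) ^ (2 * m + 1) := by
          rw [← pow_add]
          congr 1
          omega
        have lhs_eq : 2 * 2 ^ (2 * m + 1) * (C' * ((m : ℝ) + 1) ^ (m + 1) * ((m : ℝ) + 1) ^ m)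
            = (Nat.centralBinom (m + 1) : ℝ) * (2 * ((m : ℝ) + 1)) ^ (2 * m + 1) := by
          rw [hBC, mul_pow, ← hpowsplit]
          ring
        rw [lhs_eq]
        have step1 : (Nat.centralBinom (m + 1) : ℝ) * (2 * ((m : ℝ) + 1)) ^ (2 * m + 1)
            < (Nat.centralBinom (m + 1) : ℝ) * (3 * (2 * (m : ℝ) + 1) ^ (2 * m + 1)) := by
          apply mul_lt_mul_of_pos_left _ hBpos
          calc (2 * ((m : ℝ) + 1)) ^ (2 * m + 1)
              = (2 * (m : ℝ) + 1 + 1) ^ (2 * m + 1) := by ring_nf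
            _ < 3 * (2 * (m : ℝ) + 1) ^ (2 * m + 1) := hexp
        have step2 : (Nat.centralBinom (m + 1) : ℝ) * (3 * (2 * (m : ℝ) + 1) ^ (2 * m + 1))
            ≤ 2 * 2 ^ (2 * m + 1) * (2 * (m : ℝ) + 1) ^ (2 * m + 1) := by
          have h3s : (Nat.centralBinom (m + 1) : ℝ) * 3 ≤ 4 ^ (m + 1) := by
            calc (Nat.centralBinom (m + 1) : ℝ) * 3
                ≤ (Nat.centralBinom (m + 1) : ℝ) * Real.sqrt (3 * ((m : ℝ) + 1) + 1) :=
                  mul_le_mul_of_nonneg_left hs (le_of_lt hBpos)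
              _ ≤ 4 ^ (m + 1) := hB
          have h4 : (4 : ℝ) ^ (m + 1) = 2 * 2 ^ (2 * m + 1) := by
            rw [show (4 : ℝ) = 2 ^ 2 by norm_num, ← pow_mul]
            rw [show 2 * (m + 1) = (2 * m + 1) + 1 by ring, pow_succ]
            ring
          calc (Nat.centralBinom (m + 1) : ℝ) * (3 * (2 * (m : ℝ) + 1) ^ (2 * m + 1))
              = ((Nat.centralBinom (m + 1) : ℝ) * 3) * (2 * (m : ℝ) + 1) ^ (2 * m + 1) := by
                ring
            _ ≤ 4 ^ (m + 1) * (2 * (m : ℝ) + 1) ^ (2 * m + 1) :=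
                mul_le_mul_of_nonneg_right h3s (by positivity)
            _ = 2 * 2 ^ (2 * m + 1) * (2 * (m : ℝ) + 1) ^ (2 * m + 1) := by rw [h4]
        linarith
      exact_mod_cast goal'

theorem stmt_8 (k t : ℕ) (hk : 4 ≤ k) (ht : 2 ≤ t) (htk : t ≤ k - 1) :
    (Nat.choose t (t / 2) : ℝ) * ((t + 1) / 2 : ℕ) ^ ((t + 1) / 2) *
        (t / 2 + 1 : ℕ) ^ (t / 2) / ((t : ℝ) + 1) ^ t
      < (1 - 1 / (k : ℝ)) ^ t := by
  have hk0 : (0 : ℝ) < k := by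
    have : (4 : ℝ) ≤ (k : ℝ) := by exact_mod_cast hk
    linarith
  rcases eq_or_lt_of_le ht with rfl | ht3
  · -- t = 2
    have h21 : Nat.choose 2 1 = 2 := by decide
    have hk4 : (4 : ℝ) ≤ (k : ℝ) := by exact_mod_cast hk
    have h1k : 1 / (k : ℝ) ≤ 1 / 4 := by
      apply div_le_div_of_nonneg_left (by norm_num) (by norm_num) hk4
    have h34 : (3 / 4 : ℝ) ≤ 1 - 1 / k := by linarith
    have hpow : ((3 : ℝ) / 4) ^ 2 ≤ (1 - 1 / (k : ℝ)) ^ 2 :=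
      pow_le_pow_left₀ (by norm_num) h34 2
    simp only [one_div] at hpow
    norm_num [h21]
    calc (4 / 9 : ℝ) < (3 / 4 : ℝ) ^ 2 := by norm_num
      _ ≤ (1 - ((k : ℝ))⁻¹) ^ 2 := hpow
  · -- t ≥ 3
    have ht3' : 3 ≤ t := ht3
    have hkt : t + 1 ≤ k := by omega
    have ht0 : (0 : ℝ) < (t : ℝ) + 1 := by positivity
    have htR : (3 : ℝ) ≤ (t : ℝ) := by exact_mod_cast ht3'
    have hktR : (t : ℝ) + 1 ≤ (k : ℝ) := by exact_mod_cast hkt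
    have hbase : (t : ℝ) / ((t : ℝ) + 1) ≤ 1 - 1 / k := by
      have h1 : 1 / (k : ℝ) ≤ 1 / ((t : ℝ) + 1) :=
        div_le_div_of_nonneg_left (by norm_num) ht0 hktR
      have h2 : (t : ℝ) / ((t : ℝ) + 1) = 1 - 1 / ((t : ℝ) + 1) := by
        field_simp; ring
      linarith
    have hkey := aux_key t ht3'
    calc (Nat.choose t (t / 2) : ℝ) * ((t + 1) / 2 : ℕ) ^ ((t + 1) / 2) *
          (t / 2 + 1 : ℕ) ^ (t / 2) / ((t : ℝ) + 1) ^ t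
        < (t : ℝ) ^ t / ((t : ℝ) + 1) ^ t :=
          (div_lt_div_iff_of_pos_right (by positivity)).mpr hkey
      _ = ((t : ℝ) / ((t : ℝ) + 1)) ^ t := by rw [div_pow]
      _ ≤ (1 - 1 / (k : ℝ)) ^ t := pow_le_pow_left₀ (by positivity) hbase t
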